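/- Let (c_k) be a nonnegative RBVS sequence with constant V (so ∑_{k=l}^∞ |c_k − c_{k+1}| ≤ V c_l for all l) and let ξ > 0. Then there is a constant C(ξ) > 0 depending only on ξ such that for all integers 1 ≤ l ≤ L, ∑_{k=l}^{L} |c_k − c_{k+1}|·k^ξ ≤ V·c_l·l^ξ + V·C(ξ)·∑_{k=l}^{L} c_k·k^{ξ−1}. -/

import Mathlib

open Finset Real

lemma key_rpow (ξ : ℝ) (hξ : 0 < ξ) (j : ℕ) (hj : 1 ≤ j) :
    ((j : ℝ) + 1) ^ ξ - (j : ℝ) ^ ξ ≤ (ξ + 2 ^ ξ) * (j : ℝ) ^ (ξ - 1) := by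
  have hx : (1 : ℝ) ≤ (j : ℝ) := by exact_mod_cast hj
  have hx0 : (0 : ℝ) < (j : ℝ) := by linarith
  set x := (j : ℝ)
  have ht0 : 0 < 1 / x := by positivity
  have ht1 : 1 / x ≤ 1 := by
    rw [div_le_one hx0]; exact hx
  have hsub : x ^ (ξ - 1) = x ^ ξ / x := by
    rw [Real.rpow_sub hx0, Real.rpow_one]
  have hexp : (x + 1) ^ ξ = x ^ ξ * (1 + 1 / x) ^ ξ := by
    rw [← Real.mul_rpow (le_of_lt hx0) (by positivity)]
    congr 1
    field_simp
  have hmain : (1 + 1 / x) ^ ξ ≤ 1 + (ξ + 2 ^ ξ) * (1 / x) := by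
    rcases le_or_gt ξ 1 with h1 | h1
    · have := rpow_one_add_le_one_add_mul_self (s := 1 / x) (by linarith) hξ.le h1
      have h2 : (0:ℝ) ≤ 2 ^ ξ * (1 / x) := by positivity
      nlinarith
    · -- convexity: 1 + t = (1-t)*1 + t*2
      have hcv := convexOn_rpow (le_of_lt h1)
      have := hcv.2 (Set.mem_Ici.2 (by norm_num : (0:ℝ) ≤ 1))
        (Set.mem_Ici.2 (by norm_num : (0:ℝ) ≤ 2))
        (by linarith : (0:ℝ) ≤ 1 - 1 / x) ht0.le (by ring)
      simp only [smul_eq_mul] at this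
      have heq : (1 - 1 / x) * 1 + 1 / x * 2 = 1 + 1 / x := by ring
      rw [heq] at this
      rw [Real.one_rpow] at this
      have hξpos : (0:ℝ) ≤ ξ * (1 / x) := by positivity
      nlinarith
  have hstep : (x + 1) ^ ξ ≤ x ^ ξ + (ξ + 2 ^ ξ) * (x ^ ξ / x) := by
    rw [hexp]
    have hxξ : (0:ℝ) ≤ x ^ ξ := Real.rpow_nonneg hx0.le ξ
    calc x ^ ξ * (1 + 1 / x) ^ ξ ≤ x ^ ξ * (1 + (ξ + 2 ^ ξ) * (1 / x)) :=
          mul_le_mul_of_nonneg_left hmain hxξ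
      _ = x ^ ξ + (ξ + 2 ^ ξ) * (x ^ ξ / x) := by field_simp
  rw [hsub]; linarith

lemma telescope_rpow (ξ : ℝ) (l k : ℕ) (hlk : l ≤ k) :
    (k : ℝ) ^ ξ = (l : ℝ) ^ ξ +
      ∑ j ∈ Finset.Ico l k, (((j : ℝ) + 1) ^ ξ - (j : ℝ) ^ ξ) := by
  induction k with
  | zero => interval_cases l; simp
  | succ n ih =>
    rcases Nat.lt_or_ge l (n + 1) with h | h
    · have hln : l ≤ n := Nat.lt_succ_iff.mp h
      rw [Finset.sum_Ico_succ_top hln]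
      have := ih hln
      push_cast
      push_cast at this
      linarith
    · have : l = n + 1 := le_antisymm hlk h
      subst this; simp

theorem stmt16 (ξ : ℝ) (hξ : 0 < ξ) :
    ∃ C : ℝ, 0 < C ∧ ∀ (c : ℕ → ℝ), (∀ k, 0 ≤ c k) → ∀ V : ℝ, 0 < V →
      (∀ l : ℕ, 1 ≤ l → ∀ L : ℕ, l ≤ L →
        ∑ k ∈ Finset.Icc l L, |c k - c (k + 1)| ≤ V * c l) →
      ∀ l L : ℕ, 1 ≤ l → l ≤ L →
        ∑ k ∈ Finset.Icc l L, |c k - c (k + 1)| * (k : ℝ) ^ ξ ≤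
          V * c l * (l : ℝ) ^ ξ + V * C * ∑ k ∈ Finset.Icc l L, c k * (k : ℝ) ^ (ξ - 1) := by
  refine ⟨ξ + 2 ^ ξ, by positivity, ?_⟩
  intro c hc V hV hrbv l L hl hlL
  set K : ℝ := ξ + 2 ^ ξ with hK
  have hK0 : 0 < K := by positivity
  -- rewrite each k^ξ via telescoping
  have hsplit : ∑ k ∈ Finset.Icc l L, |c k - c (k + 1)| * (k : ℝ) ^ ξ =
      (∑ k ∈ Finset.Icc l L, |c k - c (k + 1)|) * (l : ℝ) ^ ξ +
      ∑ k ∈ Finset.Icc l L, ∑ j ∈ Finset.Ico l k,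
        |c k - c (k + 1)| * (((j : ℝ) + 1) ^ ξ - (j : ℝ) ^ ξ) := by
    rw [Finset.sum_mul, ← Finset.sum_add_distrib]
    refine Finset.sum_congr rfl fun k hk => ?_
    rw [Finset.mem_Icc] at hk
    rw [telescope_rpow ξ l k hk.1, ← Finset.mul_sum]
    ring
  rw [hsplit]
  have hfirst : (∑ k ∈ Finset.Icc l L, |c k - c (k + 1)|) * (l : ℝ) ^ ξ ≤
      V * c l * (l : ℝ) ^ ξ := by
    apply mul_le_mul_of_nonneg_right (hrbv l hl L hlL) (Real.rpow_nonneg (by positivity) ξ)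
  have hswap : ∑ k ∈ Finset.Icc l L, ∑ j ∈ Finset.Ico l k,
        |c k - c (k + 1)| * (((j : ℝ) + 1) ^ ξ - (j : ℝ) ^ ξ) =
      ∑ j ∈ Finset.Ico l L, ∑ k ∈ Finset.Icc (j + 1) L,
        |c k - c (k + 1)| * (((j : ℝ) + 1) ^ ξ - (j : ℝ) ^ ξ) := by
    refine Finset.sum_comm' fun k j => ?_
    simp only [Finset.mem_Icc, Finset.mem_Ico]
    omega
  rw [hswap]
  have hsecond : ∑ j ∈ Finset.Ico l L, ∑ k ∈ Finset.Icc (j + 1) L,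
        |c k - c (k + 1)| * (((j : ℝ) + 1) ^ ξ - (j : ℝ) ^ ξ) ≤
      V * K * ∑ k ∈ Finset.Icc l L, c k * (k : ℝ) ^ (ξ - 1) := by
    have hterm : ∀ j ∈ Finset.Ico l L, ∑ k ∈ Finset.Icc (j + 1) L,
          |c k - c (k + 1)| * (((j : ℝ) + 1) ^ ξ - (j : ℝ) ^ ξ) ≤
        V * K * (c j * (j : ℝ) ^ (ξ - 1)) := by
      intro j hj
      rw [Finset.mem_Ico] at hj
      have hj1 : 1 ≤ j := le_trans hl hj.1
      rw [← Finset.sum_mul]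
      have hδ0 : 0 ≤ ((j : ℝ) + 1) ^ ξ - (j : ℝ) ^ ξ := by
        have : (j : ℝ) ^ ξ ≤ ((j : ℝ) + 1) ^ ξ :=
          Real.rpow_le_rpow (by positivity) (by linarith) hξ.le
        linarith
      have hsum : ∑ k ∈ Finset.Icc (j + 1) L, |c k - c (k + 1)| ≤ V * c j := by
        calc ∑ k ∈ Finset.Icc (j + 1) L, |c k - c (k + 1)|
            ≤ ∑ k ∈ Finset.Icc j L, |c k - c (k + 1)| :=
              Finset.sum_le_sum_of_subset_of_nonneg
                (Finset.Icc_subset_Icc_left (Nat.le_succ j)) (fun _ _ _ => abs_nonneg _)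
          _ ≤ V * c j := hrbv j hj1 L (le_of_lt hj.2)
      have hδK : ((j : ℝ) + 1) ^ ξ - (j : ℝ) ^ ξ ≤ K * (j : ℝ) ^ (ξ - 1) :=
        key_rpow ξ hξ j hj1
      have h1 : (∑ k ∈ Finset.Icc (j + 1) L, |c k - c (k + 1)|) *
            (((j : ℝ) + 1) ^ ξ - (j : ℝ) ^ ξ) ≤ (V * c j) * (K * (j : ℝ) ^ (ξ - 1)) := by
        exact mul_le_mul hsum hδK hδ0 (mul_nonneg hV.le (hc j))
      calc (∑ k ∈ Finset.Icc (j + 1) L, |c k - c (k + 1)|) *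
            (((j : ℝ) + 1) ^ ξ - (j : ℝ) ^ ξ) ≤ (V * c j) * (K * (j : ℝ) ^ (ξ - 1)) := h1
        _ = V * K * (c j * (j : ℝ) ^ (ξ - 1)) := by ring
    calc ∑ j ∈ Finset.Ico l L, ∑ k ∈ Finset.Icc (j + 1) L,
          |c k - c (k + 1)| * (((j : ℝ) + 1) ^ ξ - (j : ℝ) ^ ξ)
        ≤ ∑ j ∈ Finset.Ico l L, V * K * (c j * (j : ℝ) ^ (ξ - 1)) :=
          Finset.sum_le_sum hterm
      _ = V * K * ∑ j ∈ Finset.Ico l L, c j * (j : ℝ) ^ (ξ - 1) := by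
          rw [Finset.mul_sum]
      _ ≤ V * K * ∑ j ∈ Finset.Icc l L, c j * (j : ℝ) ^ (ξ - 1) := by
          apply mul_le_mul_of_nonneg_left _ (mul_nonneg hV.le hK0.le)
          apply Finset.sum_le_sum_of_subset_of_nonneg
          · exact Finset.Ico_subset_Icc_self
          · intro i hi _
            rw [Finset.mem_Icc] at hi
            have h0 : (0:ℝ) < (i:ℝ) := by exact_mod_cast lt_of_lt_of_le hl hi.1
            exact mul_nonneg (hc i) (Real.rpow_nonneg h0.le _)
  linarith
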